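/- Let A and B be abelian categories and let F : A ⥤ B be an exact functor, i.e. F preserves finite limits and finite colimits. If F is conservative (reflects isomorphisms), then the induced functor Ind F : Ind A ⥤ Ind B between ind-completions — the unique extension of F along the Yoneda functors A → Ind A and B → Ind B that preserves filtered colimits — is conservative. -/

import Mathlib

open CategoryTheory Limits Opposite

universe v u₁ u₂

namespace IndConsAux

variable {A : Type u₁} [Category.{v} A]

/-- `Hom(yₐ, -)` on `Ind A` is isomorphic to evaluation of the underlying presheaf at `a`. -/
noncomputable def indCoyonedaIso (a : A) :
    coyoneda.obj (op (Ind.yoneda.obj a)) ≅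
      Ind.inclusion A ⋙ (evaluation Aᵒᵖ (Type v)).obj (op a) :=
  NatIso.ofComponents
    (fun Z => Equiv.toIso <|
      ((Ind.inclusion.fullyFaithful (C := A)).homEquiv).trans <|
        ((Ind.yonedaCompInclusion.app a).homCongr (Iso.refl ((Ind.inclusion A).obj Z))).trans
          yonedaEquiv)
    (by
      intro Z Z' h
      ext u
      simp [Iso.homCongr, Functor.FullyFaithful.homEquiv, yonedaEquiv_comp])

noncomputable instance (a : A) (K : Type v) [SmallCategory K] [IsFiltered K] :
    PreservesColimitsOfShape K (coyoneda.obj (op (Ind.yoneda.obj a))) :=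
  preservesColimitsOfShape_of_natIso (indCoyonedaIso a).symm

theorem exists_rep {K : Type v} [SmallCategory K] [IsFiltered K] (G : K ⥤ A)
    {c : Cocone (G ⋙ Ind.yoneda)} (hc : IsColimit c) {a : A} (h : Ind.yoneda.obj a ⟶ c.pt) :
    ∃ (k : K) (g : a ⟶ G.obj k), h = Ind.yoneda.map g ≫ c.ι.app k := by
  have hc' := isColimitOfPreserves (coyoneda.obj (op (Ind.yoneda.obj a))) hc
  obtain ⟨k, u, hu⟩ := Types.jointly_surjective _ hc' h
  obtain ⟨g, rfl⟩ := Ind.yoneda.map_surjective u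
  exact ⟨k, g, hu.symm⟩

theorem eq_of_ι_eq {K : Type v} [SmallCategory K] [IsFiltered K] (G : K ⥤ A)
    {c : Cocone (G ⋙ Ind.yoneda)} (hc : IsColimit c) {a : A} {k : K} {g₁ g₂ : a ⟶ G.obj k}
    (hg : Ind.yoneda.map g₁ ≫ c.ι.app k = Ind.yoneda.map g₂ ≫ c.ι.app k) :
    ∃ (l : K) (φ : k ⟶ l), g₁ ≫ G.map φ = g₂ ≫ G.map φ := by
  have hc' := isColimitOfPreserves (coyoneda.obj (op (Ind.yoneda.obj a))) hc
  have h2 := (Types.FilteredColimit.isColimit_eq_iff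
      ((G ⋙ Ind.yoneda) ⋙ coyoneda.obj (op (Ind.yoneda.obj a))) hc'
      (i := k) (j := k) (xi := Ind.yoneda.map g₁) (xj := Ind.yoneda.map g₂)).mp hg
  obtain ⟨l, φ, ψ, hφψ⟩ := h2
  have hφψ' : Ind.yoneda.map (g₁ ≫ G.map φ) = Ind.yoneda.map (g₂ ≫ G.map ψ) := by
    simpa using hφψ
  have h3 : g₁ ≫ G.map φ = g₂ ≫ G.map ψ := Ind.yoneda.map_injective hφψ'
  refine ⟨IsFiltered.coeq φ ψ, φ ≫ IsFiltered.coeqHom φ ψ, ?_⟩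
  have h4 : ψ ≫ IsFiltered.coeqHom φ ψ = φ ≫ IsFiltered.coeqHom φ ψ :=
    (IsFiltered.coeq_condition φ ψ).symm
  rw [G.map_comp, ← Category.assoc, h3, Category.assoc, ← G.map_comp, h4, G.map_comp]

variable {B : Type u₂} [Category.{v} B] [Abelian A] [Abelian B]

theorem faithful_of_exact_conservative (F : A ⥤ B) [PreservesFiniteLimits F]
    [PreservesFiniteColimits F] [F.ReflectsIsomorphisms] : F.Faithful := by
  have hadd : F.Additive := Functor.additive_of_preserves_binary_products F
  constructor
  intro x y g h hgh
  have hw : F.map (g - h) = 0 := by rw [F.map_sub, hgh, sub_self]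
  have h1 : IsIso (kernel.ι (F.map (g - h))) := by
    rw [← kernelIsoOfEq_hom_comp_ι hw]
    infer_instance
  have h2 : IsIso (F.map (kernel.ι (g - h))) := by
    rw [← kernelComparison_comp_ι]
    infer_instance
  have h3 : IsIso (kernel.ι (g - h)) := isIso_of_reflects_iso _ F
  have h5 : g - h = 0 := by
    rw [← cancel_epi (kernel.ι (g - h)), kernel.condition, comp_zero]
  rw [sub_eq_zero] at h5
  exact h5

theorem epi_of_map_epi (F : A ⥤ B) [PreservesFiniteLimits F]
    [PreservesFiniteColimits F] [F.ReflectsIsomorphisms]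
    {P a : A} (p : P ⟶ a) (hp : Epi (F.map p)) : Epi p := by
  have hf : F.Faithful := faithful_of_exact_conservative F
  apply CategoryTheory.Abelian.epi_of_cokernel_π_eq_zero
  apply hf.map_injective
  rw [← π_comp_cokernelComparison, cokernel.π_of_epi, zero_comp, F.map_zero]

theorem pullback_epi_of_map_factor (F : A ⥤ B) [PreservesFiniteLimits F]
    [PreservesFiniteColimits F] [F.ReflectsIsomorphisms]
    {c d z : A} (α : c ⟶ z) (τ : d ⟶ z) (s₀ : F.obj d ⟶ F.obj c)
    (hpb : s₀ ≫ F.map α = F.map τ) : Epi (pullback.snd α τ) := by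
  apply epi_of_map_epi F
  have hsec : pullback.lift s₀ (𝟙 (F.obj d)) (by simpa using hpb) ≫
      pullback.snd (F.map α) (F.map τ) = 𝟙 (F.obj d) := pullback.lift_snd _ _ _
  haveI : IsSplitEpi (pullback.snd (F.map α) (F.map τ)) := IsSplitEpi.mk' ⟨_, hsec⟩
  rw [← pullbackComparison_comp_snd F α τ]
  exact epi_comp _ _

end IndConsAux

open IndConsAux

set_option maxHeartbeats 1000000 in
/-- If `F : A ⥤ B` is an exact (finite-limit- and finite-colimit-preserving) conservative
functor between abelian categories, then the induced functor `Ind F : Ind A ⥤ Ind B` between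
ind-completions — the extension of `F` along the Yoneda functors `A ⥤ Ind A` and `B ⥤ Ind B`
that preserves filtered colimits — is conservative. -/
theorem ind_extension_of_conservative_exact_is_conservative
    {A : Type u₁} [Category.{v} A] {B : Type u₂} [Category.{v} B]
    [Abelian A] [Abelian B]
    (F : A ⥤ B) [PreservesFiniteLimits F] [PreservesFiniteColimits F]
    [F.ReflectsIsomorphisms]
    (IndF : Ind A ⥤ Ind B)
    [∀ (J : Type v) [SmallCategory J] [IsFiltered J], PreservesColimitsOfShape J IndF]
    (e : Ind.yoneda ⋙ IndF ≅ F ⋙ Ind.yoneda) :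
    IndF.ReflectsIsomorphisms := by
  have hFf : F.Faithful := faithful_of_exact_conservative F
  constructor
  intro X Y f hf
  haveI : IsIso (IndF.map f) := hf
  -- presentations of X and Y
  let D : X.presentation.I ⥤ A := X.presentation.F
  let E : Y.presentation.I ⥤ A := Y.presentation.F
  let cX : Cocone (D ⋙ Ind.yoneda) :=
    (colimit.cocone (D ⋙ Ind.yoneda)).extend (Ind.colimitPresentationCompYoneda X).hom
  have hcX : IsColimit cX := (colimit.isColimit _).extendIso _
  let cY : Cocone (E ⋙ Ind.yoneda) :=
    (colimit.cocone (E ⋙ Ind.yoneda)).extend (Ind.colimitPresentationCompYoneda Y).hom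
  have hcY : IsColimit cY := (colimit.isColimit _).extendIso _
  have wlemX : ∀ {b : A} {k l : X.presentation.I} (φ : k ⟶ l) (h : b ⟶ D.obj k),
      Ind.yoneda.map h ≫ cX.ι.app k = Ind.yoneda.map (h ≫ D.map φ) ≫ cX.ι.app l := by
    intro b k l φ h
    rw [← cX.w φ]
    simp
  have wlemY : ∀ {b : A} {k l : Y.presentation.I} (φ : k ⟶ l) (h : b ⟶ E.obj k),
      Ind.yoneda.map h ≫ cY.ι.app k = Ind.yoneda.map (h ≫ E.map φ) ≫ cY.ι.app l := by
    intro b k l φ h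
    rw [← cY.w φ]
    simp
  -- images of the presentations under IndF
  let eX : (D ⋙ Ind.yoneda) ⋙ IndF ≅ (D ⋙ F) ⋙ Ind.yoneda := Functor.isoWhiskerLeft D e
  let eY : (E ⋙ Ind.yoneda) ⋙ IndF ≅ (E ⋙ F) ⋙ Ind.yoneda := Functor.isoWhiskerLeft E e
  let cFX : Cocone ((D ⋙ F) ⋙ Ind.yoneda) := (Cocone.precompose eX.inv).obj (IndF.mapCocone cX)
  let cFY : Cocone ((E ⋙ F) ⋙ Ind.yoneda) := (Cocone.precompose eY.inv).obj (IndF.mapCocone cY)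
  have hcFX : IsColimit cFX :=
    (IsColimit.precomposeInvEquiv eX (IndF.mapCocone cX)).symm (isColimitOfPreserves IndF hcX)
  have hcFY : IsColimit cFY :=
    (IsColimit.precomposeInvEquiv eY (IndF.mapCocone cY)).symm (isColimitOfPreserves IndF hcY)
  have cFXι : ∀ (k : X.presentation.I),
      cFX.ι.app k = e.inv.app (D.obj k) ≫ IndF.map (cX.ι.app k) := by
    intro k; rfl
  have cFYι : ∀ (k : Y.presentation.I),
      cFY.ι.app k = e.inv.app (E.obj k) ≫ IndF.map (cY.ι.app k) := by
    intro k; rfl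
  -- naturality of e.inv
  have enat : ∀ {a b : A} (g : a ⟶ b),
      e.inv.app a ≫ IndF.map (Ind.yoneda.map g) = Ind.yoneda.map (F.map g) ≫ e.inv.app b := by
    intro a b g
    exact (e.inv.naturality g).symm
  -- key computation: image of a "matrix element" under IndF, X side
  have keyX : ∀ {a : A} {k : X.presentation.I} (u : a ⟶ D.obj k),
      e.inv.app a ≫ IndF.map (Ind.yoneda.map u ≫ cX.ι.app k) =
        Ind.yoneda.map (F.map u) ≫ cFX.ι.app k := by
    intro a k u
    rw [IndF.map_comp, ← Category.assoc, enat, cFXι, Category.assoc]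
  have keyY : ∀ {a : A} {k : Y.presentation.I} (u : a ⟶ E.obj k),
      e.inv.app a ≫ IndF.map (Ind.yoneda.map u ≫ cY.ι.app k) =
        Ind.yoneda.map (F.map u) ≫ cFY.ι.app k := by
    intro a k u
    rw [IndF.map_comp, ← Category.assoc, enat, cFYι, Category.assoc]
  -- cancellation: f is "injective on points of Ind.yoneda"
  have cancel : ∀ (a : A) (u v : Ind.yoneda.obj a ⟶ X), u ≫ f = v ≫ f → u = v := by
    intro a u v huv
    have hmap : e.inv.app a ≫ IndF.map u = e.inv.app a ≫ IndF.map v := by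
      have h0 : IndF.map u ≫ IndF.map f = IndF.map v ≫ IndF.map f := by
        rw [← IndF.map_comp, ← IndF.map_comp, huv]
      rw [(cancel_mono (IndF.map f)).1 h0]
    obtain ⟨k, u₀, rfl⟩ := exists_rep D hcX u
    obtain ⟨k', v₀, rfl⟩ := exists_rep D hcX v
    rw [wlemX (IsFiltered.leftToMax k k') u₀, wlemX (IsFiltered.rightToMax k k') v₀] at hmap ⊢
    set m := IsFiltered.max k k' with hm
    set u₁ := u₀ ≫ D.map (IsFiltered.leftToMax k k') with hu₁
    set v₁ := v₀ ≫ D.map (IsFiltered.rightToMax k k') with hv₁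
    rw [keyX u₁, keyX v₁] at hmap
    obtain ⟨l, φ, hφ⟩ := eq_of_ι_eq (D ⋙ F) hcFX hmap
    have hφ' : u₁ ≫ D.map φ = v₁ ≫ D.map φ := by
      apply hFf.map_injective
      simpa [Functor.map_comp] using hφ
    rw [wlemX φ u₁, wlemX φ v₁, hφ']
  -- surjectivity on points
  have surj : ∀ (a : A) (t : Ind.yoneda.obj a ⟶ Y), ∃ u : Ind.yoneda.obj a ⟶ X, u ≫ f = t := by
    intro a t
    let s : Ind.yoneda.obj (F.obj a) ⟶ cFX.pt :=
      e.inv.app a ≫ IndF.map t ≫ CategoryTheory.inv (IndF.map f)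
    obtain ⟨k, s₀, hs⟩ := exists_rep (D ⋙ F) hcFX s
    obtain ⟨m, t₀, ht⟩ := exists_rep E hcY t
    obtain ⟨m', fk₀, hfk⟩ := exists_rep E hcY (cX.ι.app k ≫ f)
    obtain ⟨t₁, ht'⟩ : ∃ t₁ : a ⟶ E.obj (IsFiltered.max m m'),
        t = Ind.yoneda.map t₁ ≫ cY.ι.app (IsFiltered.max m m') :=
      ⟨t₀ ≫ E.map (IsFiltered.leftToMax m m'),
        by rw [ht, wlemY (IsFiltered.leftToMax m m') t₀]⟩
    obtain ⟨fk₁, hfk'⟩ : ∃ fk₁ : D.obj k ⟶ E.obj (IsFiltered.max m m'),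
        cX.ι.app k ≫ f = Ind.yoneda.map fk₁ ≫ cY.ι.app (IsFiltered.max m m') :=
      ⟨fk₀ ≫ E.map (IsFiltered.rightToMax m m'),
        by rw [hfk, wlemY (IsFiltered.rightToMax m m') fk₀]⟩
    -- the main equation
    have heq : Ind.yoneda.map (s₀ ≫ F.map fk₁) ≫ cFY.ι.app (IsFiltered.max m m') =
        Ind.yoneda.map (F.map t₁) ≫ cFY.ι.app (IsFiltered.max m m') := by
      have h0 : s ≫ IndF.map f = e.inv.app a ≫ IndF.map t := by
        show (e.inv.app a ≫ IndF.map t ≫ CategoryTheory.inv (IndF.map f)) ≫ IndF.map f =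
          e.inv.app a ≫ IndF.map t
        simp
      rw [hs] at h0
      have h1 : Ind.yoneda.map s₀ ≫ cFX.ι.app k ≫ IndF.map f =
          Ind.yoneda.map s₀ ≫ Ind.yoneda.map (F.map fk₁) ≫
            cFY.ι.app (IsFiltered.max m m') := by
        rw [cFXι, Category.assoc, ← IndF.map_comp, hfk', ← keyY fk₁]
      have h2 : e.inv.app a ≫ IndF.map t =
          Ind.yoneda.map (F.map t₁) ≫ cFY.ι.app (IsFiltered.max m m') := by
        rw [ht', keyY t₁]
      rw [Category.assoc, h1, h2] at h0
      rw [← h0, Functor.map_comp, Category.assoc]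
    obtain ⟨n', ψ, hψ⟩ := eq_of_ι_eq (E ⋙ F) hcFY heq
    have hpb : s₀ ≫ F.map (fk₁ ≫ E.map ψ) = F.map (t₁ ≫ E.map ψ) := by
      rw [F.map_comp, F.map_comp, ← Category.assoc]
      exact hψ
    obtain ⟨P0, p, q₀, hpepi, hcond⟩ : ∃ (P0 : A) (p : P0 ⟶ a) (q₀ : P0 ⟶ D.obj k),
        Epi p ∧ q₀ ≫ (fk₁ ≫ E.map ψ) = p ≫ (t₁ ≫ E.map ψ) :=
      ⟨pullback (fk₁ ≫ E.map ψ) (t₁ ≫ E.map ψ), pullback.snd _ _, pullback.fst _ _,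
        pullback_epi_of_map_factor F _ _ s₀ hpb, pullback.condition⟩
    have hqf : (Ind.yoneda.map q₀ ≫ cX.ι.app k) ≫ f = Ind.yoneda.map p ≫ t := by
      rw [Category.assoc, hfk', ht', ← Category.assoc, ← Functor.map_comp,
        wlemY ψ (q₀ ≫ fk₁)]
      rw [← Category.assoc, ← Functor.map_comp, wlemY ψ (p ≫ t₁)]
      simp only [Category.assoc]
      rw [hcond]
    have hqf2 : Ind.yoneda.map q₀ ≫ cX.ι.app k ≫ f = Ind.yoneda.map p ≫ t := by
      rw [← Category.assoc]
      exact hqf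
    -- descend along the regular epi p
    have rp : RegularEpi p := regularEpiOfEpi p
    have hlr : Ind.yoneda.map rp.left ≫ Ind.yoneda.map q₀ ≫ cX.ι.app k =
        Ind.yoneda.map rp.right ≫ Ind.yoneda.map q₀ ≫ cX.ι.app k := by
      apply cancel rp.W
      simp only [Category.assoc]
      rw [hqf2]
      rw [← Category.assoc, ← Category.assoc, ← Functor.map_comp, ← Functor.map_comp, rp.w]
    have hcofork : IsColimit (Cofork.ofπ (Ind.yoneda.map p)
        (by simp only [← Ind.yoneda.map_comp, rp.w]) :
          Cofork (Ind.yoneda.map rp.left) (Ind.yoneda.map rp.right)) :=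
      isColimitCoforkMapOfIsColimit Ind.yoneda rp.w rp.isColimit
    obtain ⟨u, hu⟩ := Cofork.IsColimit.desc' hcofork (Ind.yoneda.map q₀ ≫ cX.ι.app k) hlr
    refine ⟨u, ?_⟩
    apply Cofork.IsColimit.hom_ext hcofork
    have hu' : Ind.yoneda.map p ≫ u = Ind.yoneda.map q₀ ≫ cX.ι.app k := hu
    change Ind.yoneda.map p ≫ u ≫ f = Ind.yoneda.map p ≫ t
    rw [← Category.assoc, hu', hqf]
  -- conclude that f is an isomorphism
  have hbij : ∀ (a : A), IsIso ((coyoneda.obj (op (Ind.yoneda.obj a))).map f) := by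
    intro a
    rw [isIso_iff_bijective]
    constructor
    · intro u v huv
      exact cancel a u v huv
    · intro t
      exact surj a t
  have happ : ∀ (a : Aᵒᵖ), IsIso (((Ind.inclusion A).map f).app a) := by
    intro a
    have h1 := hbij a.unop
    have hnat := (indCoyonedaIso (A := A) a.unop).hom.naturality f
    have h2 : (Ind.inclusion A ⋙ (evaluation Aᵒᵖ (Type v)).obj (op a.unop)).map f =
        CategoryTheory.inv ((indCoyonedaIso (A := A) a.unop).hom.app X) ≫
          ((coyoneda.obj (op (Ind.yoneda.obj a.unop))).map f ≫
            (indCoyonedaIso (A := A) a.unop).hom.app Y) := by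
      rw [IsIso.eq_inv_comp, hnat]
    have h3 : IsIso ((Ind.inclusion A ⋙ (evaluation Aᵒᵖ (Type v)).obj (op a.unop)).map f) := by
      rw [h2]
      infer_instance
    exact h3
  have : IsIso ((Ind.inclusion A).map f) := NatIso.isIso_of_isIso_app _
  exact isIso_of_reflects_iso f (Ind.inclusion A)
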